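/- arXiv:0705.3215 — 3 statements merged into one kernel-verified Lean document; each statement's English description precedes it below -/
import Mathlib

section
/- Let S be a finite set of permutations generating a group H, and suppose S contains no element of the form s = g ∘ h with g ≠ 1, h ≠ 1 and g, h support-disjoint. If S is support-indecomposable as a set, then H is support-indecomposable as a group. -/
/-- A set of permutations is support-indecomposable if it cannot be partitioned
into two nonempty support-disjoint subsets. -/
def SetSuppIndecomposable {X : Type*} (S : Set (Equiv.Perm X)) : Prop :=
  ¬ ∃ S₁ S₂ : Set (Equiv.Perm X), S₁.Nonempty ∧ S₂.Nonempty ∧ S = S₁ ∪ S₂ ∧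
    ∀ p ∈ S₁, ∀ q ∈ S₂, Disjoint {x | p x ≠ x} {x | q x ≠ x}

/-- A permutation group is support-indecomposable if it is not the internal direct
product of two support-disjoint nontrivial subgroups. -/
def GroupSuppIndecomposable {X : Type*} (H : Subgroup (Equiv.Perm X)) : Prop :=
  ¬ ∃ K L : Subgroup (Equiv.Perm X), K ≠ ⊥ ∧ L ≠ ⊥ ∧
    (∀ k ∈ K, ∀ l ∈ L, Disjoint {x | k x ≠ x} {x | l x ≠ x}) ∧ K ⊔ L = H

lemma perm_commute_of_disjoint_supp {X : Type*} {f g : Equiv.Perm X}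
    (h : Disjoint {x | f x ≠ x} {x | g x ≠ x}) : Commute f g := by
  have hd : f.Disjoint g := fun x => by
    by_cases hx : f x = x
    · exact Or.inl hx
    · exact Or.inr (not_not.mp (Set.disjoint_left.mp h hx))
  exact hd.commute

lemma perm_eq_one_of_disjoint_self {X : Type*} {f : Equiv.Perm X}
    (h : Disjoint {x | f x ≠ x} {x | f x ≠ x}) : f = 1 := by
  rw [disjoint_self, Set.bot_eq_empty, Set.eq_empty_iff_forall_notMem] at h
  ext x
  exact not_not.mp (h x)

/-- If a finite set `S` of permutations contains no element that is a product of two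
nontrivial support-disjoint permutations, and `S` is support-indecomposable as a
set, then the group `H` generated by `S` is support-indecomposable as a group. -/
theorem closure_suppIndecomposable_of_set {X : Type*} (S : Set (Equiv.Perm X))
    (hfin : S.Finite) (H : Subgroup (Equiv.Perm X)) (hH : Subgroup.closure S = H)
    (hstar : ¬ ∃ s ∈ S, ∃ g h : Equiv.Perm X, g ≠ 1 ∧ h ≠ 1 ∧
      Disjoint {x | g x ≠ x} {x | h x ≠ x} ∧ s = g * h)
    (hSind : SetSuppIndecomposable S) :
    GroupSuppIndecomposable H := by
  rintro ⟨K, L, hK, hL, hdisj, hsup⟩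
  push_neg at hstar
  -- every element of H is a product k * l with k ∈ K, l ∈ L
  have hdec : ∀ s ∈ H, ∃ k ∈ K, ∃ l ∈ L, s = k * l := by
    intro s hs
    rw [← hsup, Subgroup.sup_eq_closure] at hs
    refine Subgroup.closure_induction ?_ ?_ ?_ ?_ hs
    · rintro x (hx | hx)
      · exact ⟨x, hx, 1, L.one_mem, (mul_one x).symm⟩
      · exact ⟨1, K.one_mem, x, hx, (one_mul x).symm⟩
    · exact ⟨1, K.one_mem, 1, L.one_mem, (one_mul 1).symm⟩
    · rintro x y _ _ ⟨k1, hk1, l1, hl1, rfl⟩ ⟨k2, hk2, l2, hl2, rfl⟩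
      refine ⟨k1 * k2, K.mul_mem hk1 hk2, l1 * l2, L.mul_mem hl1 hl2, ?_⟩
      have hc : Commute k2 l1 := perm_commute_of_disjoint_supp (hdisj k2 hk2 l1 hl1)
      calc k1 * l1 * (k2 * l2) = k1 * (l1 * k2) * l2 := by group
        _ = k1 * (k2 * l1) * l2 := by rw [hc.eq]
        _ = k1 * k2 * (l1 * l2) := by group
    · rintro x _ ⟨k, hk, l, hl, rfl⟩
      refine ⟨k⁻¹, K.inv_mem hk, l⁻¹, L.inv_mem hl, ?_⟩
      have hc : Commute k⁻¹ l⁻¹ :=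
        (perm_commute_of_disjoint_supp (hdisj k hk l hl)).inv_inv
      rw [mul_inv_rev, hc.eq]
  have hSsub : S ⊆ (H : Set _) := hH ▸ Subgroup.subset_closure
  -- each element of S lies in K or in L
  have hsplit : ∀ s ∈ S, s ∈ K ∨ s ∈ L := by
    intro s hs
    obtain ⟨k, hk, l, hl, rfl⟩ := hdec s (hSsub hs)
    by_cases hk1 : k = 1
    · right; rw [hk1, one_mul]; exact hl
    by_cases hl1 : l = 1
    · left; rw [hl1, mul_one]; exact hk
    exact absurd rfl (hstar _ hs k l hk1 hl1 (hdisj k hk l hl))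
  have hbot : ∀ (A B : Subgroup (Equiv.Perm X)),
      (∀ a ∈ A, ∀ b ∈ B, Disjoint {x | a x ≠ x} {x | b x ≠ x}) →
      S ⊆ (B : Set (Equiv.Perm X)) → A ≤ H → A = ⊥ := by
    intro A B hAB hSB hAH
    have hHB : H ≤ B := hH ▸ (Subgroup.closure_le B).mpr hSB
    rw [eq_bot_iff]
    intro a ha
    have hd := hAB a ha a (hHB (hAH ha))
    simpa [Subgroup.mem_bot] using perm_eq_one_of_disjoint_self hd
  have hdisj' : ∀ l ∈ L, ∀ k ∈ K, Disjoint {x | l x ≠ x} {x | k x ≠ x} :=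
    fun l hl k hk => (hdisj k hk l hl).symm
  refine hSind ⟨{s ∈ S | s ∈ K}, {s ∈ S | s ∈ L}, ?_, ?_, ?_, ?_⟩
  · by_contra hne
    have hSL : S ⊆ (L : Set (Equiv.Perm X)) := fun s hs =>
      (hsplit s hs).resolve_left fun hk => hne ⟨s, hs, hk⟩
    exact hK (hbot K L hdisj hSL (hsup ▸ le_sup_left))
  · by_contra hne
    have hSK : S ⊆ (K : Set (Equiv.Perm X)) := fun s hs =>
      (hsplit s hs).resolve_right fun hl => hne ⟨s, hs, hl⟩
    exact hL (hbot L K hdisj' hSK (hsup ▸ le_sup_right))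
  · apply Set.Subset.antisymm
    · intro s hs
      rcases hsplit s hs with h | h
      · exact Or.inl ⟨hs, h⟩
      · exact Or.inr ⟨hs, h⟩
    · rintro s (⟨hs, _⟩ | ⟨hs, _⟩) <;> exact hs
  · rintro p ⟨_, hpK⟩ q ⟨_, hqL⟩
    exact hdisj p hpK q hqL
end

section
/- If a permutation group H is support-indecomposable as a group, then any generating set S of H is support-indecomposable as a set (provided every element of S is nontrivial). -/
lemma supp_subset_of_mem_closure {X : Type*} (S₁ : Set (Equiv.Perm X)) (A : Set X)
    (hA : ∀ p ∈ S₁, ∀ x, p x ≠ x → x ∈ A) :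
    ∀ k ∈ Subgroup.closure S₁, ∀ x, k x ≠ x → x ∈ A := by
  intro k hk
  induction hk using Subgroup.closure_induction with
  | mem p hp => exact hA p hp
  | one => intro x hx; simp at hx
  | mul a b _ _ ha hb =>
    intro x hx
    by_cases h : b x = x
    · exact ha x (by simpa [Equiv.Perm.mul_apply, h] using hx)
    · exact hb x h
  | inv a _ ha =>
    intro x hx
    apply ha x
    intro h
    apply hx
    rw [Equiv.Perm.inv_eq_iff_eq]
    exact h.symm

/-- If a permutation group `H` is support-indecomposable as a group, then any
generating set `S` of `H` consisting of nontrivial elements is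
support-indecomposable as a set. -/
theorem set_suppIndecomposable_of_group {X : Type*} (S : Set (Equiv.Perm X))
    (H : Subgroup (Equiv.Perm X)) (hH : Subgroup.closure S = H)
    (hnt : ∀ s ∈ S, s ≠ 1) (hHind : GroupSuppIndecomposable H) :
    SetSuppIndecomposable S := by
  rintro ⟨S₁, S₂, ⟨p₁, hp₁⟩, ⟨p₂, hp₂⟩, hunion, hdisj⟩
  apply hHind
  refine ⟨Subgroup.closure S₁, Subgroup.closure S₂, ?_, ?_, ?_, ?_⟩
  · intro h
    exact hnt p₁ (hunion ▸ Or.inl hp₁)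
      (Subgroup.mem_bot.mp (h ▸ Subgroup.subset_closure hp₁))
  · intro h
    exact hnt p₂ (hunion ▸ Or.inr hp₂)
      (Subgroup.mem_bot.mp (h ▸ Subgroup.subset_closure hp₂))
  · intro k hk l hl
    have hk' := supp_subset_of_mem_closure S₁ {x | ∃ p ∈ S₁, p x ≠ x} (fun p hp x hx => ⟨p, hp, hx⟩) k hk
    have hl' := supp_subset_of_mem_closure S₂ {x | ∃ q ∈ S₂, q x ≠ x} (fun q hq x hx => ⟨q, hq, hx⟩) l hl
    rw [Set.disjoint_left]
    rintro x hxk hxl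
    obtain ⟨p, hp, hpx⟩ := hk' x hxk
    obtain ⟨q, hq, hqx⟩ := hl' x hxl
    exact Set.disjoint_left.mp (hdisj p hp q hq) hpx hqx
  · rw [← Subgroup.closure_union, ← hunion, hH]
end

section
/- Let G be a group and suppose G has two internal direct product decompositions G = H₁ × ⋯ × Hₙ and G = K₁ × ⋯ × Kₘ, where the Hᵢ and Kⱼ are subgroups of a symmetric group Sym(X), factors within each decomposition are pairwise support-disjoint, and each factor is support-indecomposable and nontrivial. Then n = m and there exists a permutation σ of {1,…,n} such that Hᵢ = K_{σ(i)} for each i. -/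
section Helpers

variable {X : Type*}

private lemma perm_disjoint_of_set_disjoint {p q : Equiv.Perm X}
    (h : Disjoint {x | p x ≠ x} {x | q x ≠ x}) : p.Disjoint q := fun x => by
  rcases eq_or_ne (p x) x with h' | h'
  · exact Or.inl h'
  · exact Or.inr (not_not.mp (Set.disjoint_left.mp h h'))

private lemma supp_mul_subset (p q : Equiv.Perm X) :
    {x | (p * q) x ≠ x} ⊆ {x | p x ≠ x} ∪ {x | q x ≠ x} := by
  intro x hx
  rcases eq_or_ne (q x) x with h | h
  · left
    simpa [Equiv.Perm.mul_apply, h] using hx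
  · exact Or.inr h

/-- Decomposition of an element of a support-disjoint supremum into components. -/
private lemma decomp {m : ℕ} (K : Fin m → Subgroup (Equiv.Perm X))
    (hKdisj : ∀ i j, i ≠ j → ∀ p ∈ K i, ∀ q ∈ K j,
      Disjoint {x | p x ≠ x} {x | q x ≠ x})
    {g : Equiv.Perm X} (hg : g ∈ ⨆ j, K j) :
    ∃ f : Fin m → Equiv.Perm X, (∀ j, f j ∈ K j) ∧
      (∀ T : Subgroup (Equiv.Perm X), (∀ j, f j ∈ T) → g ∈ T) ∧
      (∀ j x, f j x ≠ x → g x = f j x) := by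
  classical
  have hcomm : Pairwise fun a b : Fin m => ∀ x y : Equiv.Perm X,
      x ∈ K a → y ∈ K b → Commute x y :=
    fun a b hab x y hx hy =>
      (perm_disjoint_of_set_disjoint (hKdisj a b hab x hx y hy)).commute
  rw [← Subgroup.noncommPiCoprod_range (hcomm := hcomm)] at hg
  obtain ⟨f, rfl⟩ := MonoidHom.mem_range.mp hg
  refine ⟨fun j => ↑(f j), fun j => (f j).2, ?_, ?_⟩
  · intro T hT
    rw [Subgroup.noncommPiCoprod_apply]
    exact Finset.noncommProd_induction _ _ _ (· ∈ T)
      (fun a b ha hb => T.mul_mem ha hb) T.one_mem (fun j _ => hT j)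
  · intro j0 x hx
    rw [Subgroup.noncommPiCoprod_apply]
    erw [← Finset.mul_noncommProd_erase Finset.univ (Finset.mem_univ j0)]
    rw [Equiv.Perm.mul_apply]
    congr 1
    refine Finset.noncommProd_induction _ _ _ (fun g : Equiv.Perm X => g x = x) ?_ rfl ?_
    · intro a b ha hb
      rw [Equiv.Perm.mul_apply, hb, ha]
    · intro j hj
      have hne : j ≠ j0 := (Finset.mem_erase.mp hj).1
      exact (perm_disjoint_of_set_disjoint
        (hKdisj j j0 hne _ (f j).2 _ (f j0).2) x).resolve_right hx

/-- If every point moved by `g` is moved by some element of `H i`, and `g` lies in the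
supremum of the pairwise support-disjoint family `H`, then `g ∈ H i`. -/
private lemma mem_of_moved_imp {n : ℕ} (H : Fin n → Subgroup (Equiv.Perm X))
    (hHdisj : ∀ i j, i ≠ j → ∀ p ∈ H i, ∀ q ∈ H j,
      Disjoint {x | p x ≠ x} {x | q x ≠ x})
    {g : Equiv.Perm X} (hg : g ∈ ⨆ i', H i') (i : Fin n)
    (hcond : ∀ x, g x ≠ x → ∃ p ∈ H i, p x ≠ x) : g ∈ H i := by
  obtain ⟨f, hfmem, hprod, hone⟩ := decomp H hHdisj hg
  have h1 : ∀ j, j ≠ i → f j = 1 := by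
    intro j hj
    ext x
    simp only [Equiv.Perm.one_apply]
    by_contra hx
    obtain ⟨p, hp, hpx⟩ := hcond x (by rw [hone j x hx]; exact hx)
    exact hpx ((perm_disjoint_of_set_disjoint
      (hHdisj i j (Ne.symm hj) p hp (f j) (hfmem j)) x).resolve_right hx)
  refine hprod (H i) fun j => ?_
  rcases eq_or_ne j i with rfl | hj
  · exact hfmem j
  · rw [h1 j hj]; exact (H i).one_mem

private lemma key_le {n m : ℕ} (H : Fin n → Subgroup (Equiv.Perm X))
    (K : Fin m → Subgroup (Equiv.Perm X))
    (hHdisj : ∀ i j, i ≠ j → ∀ p ∈ H i, ∀ q ∈ H j,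
      Disjoint {x | p x ≠ x} {x | q x ≠ x})
    (hKdisj : ∀ i j, i ≠ j → ∀ p ∈ K i, ∀ q ∈ K j,
      Disjoint {x | p x ≠ x} {x | q x ≠ x})
    (i : Fin n) (hnt : H i ≠ ⊥) (hind : GroupSuppIndecomposable (H i))
    (hsup : ⨆ i', H i' = ⨆ j, K j) : ∃ j, H i ≤ K j := by
  classical
  set L : Fin m → Subgroup (Equiv.Perm X) := fun j => H i ⊓ K j with hLdef
  have hHL : H i = ⨆ j, L j := by
    apply le_antisymm
    · intro h hh
      have hg : h ∈ ⨆ j, K j := by rw [← hsup]; exact le_iSup H i hh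
      obtain ⟨f, hfmem, hprod, hone⟩ := decomp K hKdisj hg
      have hfH : ∀ j, f j ∈ H i := by
        intro j
        refine mem_of_moved_imp H hHdisj ?_ i ?_
        · rw [hsup]; exact le_iSup K j (hfmem j)
        · intro x hx
          exact ⟨h, hh, by rw [hone j x hx]; exact hx⟩
      exact hprod (⨆ j, L j) fun j => (le_iSup L j) ⟨hfH j, hfmem j⟩
    · exact iSup_le fun j => inf_le_left
  have hex : ∃ j0, L j0 ≠ ⊥ := by
    by_contra hc
    push_neg at hc
    exact hnt (by rw [hHL]; exact iSup_eq_bot.mpr hc)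
  obtain ⟨j0, hj0⟩ := hex
  refine ⟨j0, ?_⟩
  set B : Subgroup (Equiv.Perm X) := ⨆ j, ⨆ (_ : j ≠ j0), L j with hBdef
  have hsplit : L j0 ⊔ B = H i := by
    rw [hHL]
    apply le_antisymm
    · exact sup_le (le_iSup L j0) (iSup_le fun j => iSup_le fun _ => le_iSup L j)
    · refine iSup_le fun j => ?_
      rcases eq_or_ne j j0 with rfl | hj
      · exact le_sup_left
      · exact le_trans (le_iSup (fun _ : j ≠ j0 => L j) hj)
          (le_trans (le_iSup (fun j => ⨆ (_ : j ≠ j0), L j) j) le_sup_right)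
  have hdisjB : ∀ a ∈ L j0, ∀ b ∈ B, Disjoint {x | a x ≠ x} {x | b x ≠ x} := by
    intro a ha b hb
    refine Subgroup.iSup_induction (C := fun g => Disjoint {x | a x ≠ x} {x | g x ≠ x}) _ hb (fun j c hc => ?_) ?_ ?_
    · rcases eq_or_ne j j0 with rfl | hj
      · rw [iSup_neg (not_not_intro rfl)] at hc
        have hc1 : c = 1 := by simpa using hc
        subst hc1
        show Disjoint {x | a x ≠ x} {x | (1 : Equiv.Perm X) x ≠ x}
        have h0 : {x | (1 : Equiv.Perm X) x ≠ x} = (∅ : Set X) := by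
          ext x; simp
        rw [h0]
        exact Set.disjoint_empty _
      · rw [iSup_pos hj] at hc
        exact hKdisj j0 j (Ne.symm hj) a ha.2 c hc.2
    · show Disjoint {x | a x ≠ x} {x | (1 : Equiv.Perm X) x ≠ x}
      have h0 : {x | (1 : Equiv.Perm X) x ≠ x} = (∅ : Set X) := by ext x; simp
      rw [h0]
      exact Set.disjoint_empty _
    · intro x y hx hy
      show Disjoint {z | a z ≠ z} {z | (x * y) z ≠ z}
      exact (Disjoint.union_right hx hy).mono_right (supp_mul_subset x y)
  have hBbot : B = ⊥ := by
    by_contra hBne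
    exact hind ⟨L j0, B, hj0, hBne, hdisjB, hsplit⟩
  rw [hBbot, sup_bot_eq] at hsplit
  rw [← hsplit]
  exact inf_le_right

/-- Two factors of a pairwise support-disjoint family sharing a nontrivial element coincide. -/
private lemma eq_of_common {n : ℕ} (H : Fin n → Subgroup (Equiv.Perm X))
    (hHdisj : ∀ i j, i ≠ j → ∀ p ∈ H i, ∀ q ∈ H j,
      Disjoint {x | p x ≠ x} {x | q x ≠ x})
    {i i' : Fin n} {p : Equiv.Perm X} (hp : p ∈ H i) (hp' : p ∈ H i')
    (hp1 : p ≠ 1) : i = i' := by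
  by_contra hne
  apply hp1
  ext x
  simp only [Equiv.Perm.one_apply]
  rcases perm_disjoint_of_set_disjoint (hHdisj i i' hne p hp p hp') x with h | h <;> exact h

end Helpers

/-- Uniqueness of the geometric decomposition: two decompositions of a permutation
group `G` into pairwise support-disjoint, support-indecomposable, nontrivial factors
agree up to a permutation of the factors. -/
theorem geometric_decomposition_unique {X : Type*} [Fintype X] {n m : ℕ}
    (G : Subgroup (Equiv.Perm X))
    (H : Fin n → Subgroup (Equiv.Perm X)) (K : Fin m → Subgroup (Equiv.Perm X))
    (hHdisj : ∀ i j, i ≠ j → ∀ p ∈ H i, ∀ q ∈ H j,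
      Disjoint {x | p x ≠ x} {x | q x ≠ x})
    (hKdisj : ∀ i j, i ≠ j → ∀ p ∈ K i, ∀ q ∈ K j,
      Disjoint {x | p x ≠ x} {x | q x ≠ x})
    (hHnt : ∀ i, H i ≠ ⊥) (hKnt : ∀ j, K j ≠ ⊥)
    (hHind : ∀ i, GroupSuppIndecomposable (H i))
    (hKind : ∀ j, GroupSuppIndecomposable (K j))
    (hHsup : ⨆ i, H i = G) (hKsup : ⨆ j, K j = G) :
    n = m ∧ ∃ e : Fin n ≃ Fin m, ∀ i, H i = K (e i) := by
  classical
  have hsupHK : ⨆ i, H i = ⨆ j, K j := hHsup.trans hKsup.symm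
  choose σ hσ using fun i => key_le H K hHdisj hKdisj i (hHnt i) (hHind i) hsupHK
  choose τ hτ using fun j => key_le K H hKdisj hHdisj j (hKnt j) (hKind j) hsupHK.symm
  have hntH : ∀ i, ∃ p : Equiv.Perm X, p ∈ H i ∧ p ≠ 1 := by
    intro i
    obtain ⟨a, ha⟩ := Subgroup.ne_bot_iff_exists_ne_one.mp (hHnt i)
    exact ⟨↑a, a.2, fun h => ha (Subtype.ext h)⟩
  have hntK : ∀ j, ∃ p : Equiv.Perm X, p ∈ K j ∧ p ≠ 1 := by
    intro j
    obtain ⟨a, ha⟩ := Subgroup.ne_bot_iff_exists_ne_one.mp (hKnt j)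
    exact ⟨↑a, a.2, fun h => ha (Subtype.ext h)⟩
  have hlr : ∀ i, τ (σ i) = i := by
    intro i
    obtain ⟨p, hp, hp1⟩ := hntH i
    exact eq_of_common H hHdisj (hτ (σ i) (hσ i hp)) hp hp1
  have hrl : ∀ j, σ (τ j) = j := by
    intro j
    obtain ⟨p, hp, hp1⟩ := hntK j
    exact eq_of_common K hKdisj (hσ (τ j) (hτ j hp)) hp hp1
  have heq : ∀ i, H i = K (σ i) := by
    intro i
    refine le_antisymm (hσ i) ?_
    have h2 := hτ (σ i)
    rwa [hlr i] at h2
  refine ⟨?_, ⟨⟨σ, τ, hlr, hrl⟩, heq⟩⟩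
  simpa using Fintype.card_congr (⟨σ, τ, hlr, hrl⟩ : Fin n ≃ Fin m)
end
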